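/- Let A be a primitive n×n nonnegative matrix and b a positive vector in ℝⁿ with Ab ≠ λ₁(A)b. Then there exists k ∈ ℕ such that A^{−k}b does not lie in the interior of the cone generated by the columns of A (assuming A is invertible, e.g. after replacing A by A + kI for large k). -/

import Mathlib

open Matrix Finset

section Helpers

variable {n : ℕ} [NeZero n]

/-- Maximum ratio of coordinates. -/
noncomputable def rmax (u v : Fin n → ℝ) : ℝ :=
  Finset.univ.sup' Finset.univ_nonempty (fun i => u i / v i)

/-- Minimum ratio of coordinates. -/
noncomputable def rmin (u v : Fin n → ℝ) : ℝ :=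
  Finset.univ.inf' Finset.univ_nonempty (fun i => u i / v i)

lemma rmin_le (u v : Fin n → ℝ) (i : Fin n) : rmin u v ≤ u i / v i :=
  Finset.inf'_le _ (mem_univ i)

lemma le_rmax (u v : Fin n → ℝ) (i : Fin n) : u i / v i ≤ rmax u v :=
  Finset.le_sup' (fun i => u i / v i) (mem_univ i)

lemma rmax_le {u v : Fin n → ℝ} {c : ℝ} (h : ∀ i, u i / v i ≤ c) : rmax u v ≤ c :=
  Finset.sup'_le _ _ fun i _ => h i

lemma le_rmin {u v : Fin n → ℝ} {c : ℝ} (h : ∀ i, c ≤ u i / v i) : c ≤ rmin u v :=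
  Finset.le_inf' _ _ fun i _ => h i

lemma rmin_le_rmax (u v : Fin n → ℝ) : rmin u v ≤ rmax u v := by
  obtain ⟨i⟩ := (inferInstance : Nonempty (Fin n))
  exact (rmin_le u v i).trans (le_rmax u v i)

/-- Elementary Birkhoff-type contraction: a strictly positive matrix
contracts the ratio-gap by a factor `1 - δ/M`. -/
lemma contract (B : Matrix (Fin n) (Fin n) ℝ) (δ M : ℝ) (hδ : 0 < δ)
    (hL : ∀ i j, δ ≤ B i j) (hU : ∀ i j, B i j ≤ M)
    (u v : Fin n → ℝ) (hv : ∀ i, 0 < v i) :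
    rmax (B.mulVec u) (B.mulVec v) - rmin (B.mulVec u) (B.mulVec v)
      ≤ (1 - δ / M) * (rmax u v - rmin u v) := by
  obtain ⟨i₀⟩ := (inferInstance : Nonempty (Fin n))
  have hM : 0 < M := hδ.trans_le ((hL i₀ i₀).trans (hU i₀ i₀))
  set α := rmin u v with hα
  set β := rmax u v with hβ
  set Su := ∑ i, u i with hSu
  set Sv := ∑ i, v i with hSv
  have hSvpos : 0 < Sv := Finset.sum_pos (fun i _ => hv i) univ_nonempty
  have hαv : ∀ i, α * v i ≤ u i := fun i =>
    (le_div_iff₀ (hv i)).mp (rmin_le u v i)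
  have hβv : ∀ i, u i ≤ β * v i := fun i =>
    (div_le_iff₀ (hv i)).mp (le_rmax u v i)
  have hαS : α * Sv ≤ Su := by
    rw [hSu, hSv, Finset.mul_sum]; exact Finset.sum_le_sum fun i _ => hαv i
  have hβS : Su ≤ β * Sv := by
    rw [hSu, hSv, Finset.mul_sum]; exact Finset.sum_le_sum fun i _ => hβv i
  have hBv_lo : ∀ i, δ * Sv ≤ (B.mulVec v) i := by
    intro i
    simp only [Matrix.mulVec, dotProduct]
    rw [hSv, Finset.mul_sum]
    exact Finset.sum_le_sum fun j _ =>
      mul_le_mul_of_nonneg_right (hL i j) (hv j).le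
  have hBv_hi : ∀ i, (B.mulVec v) i ≤ M * Sv := by
    intro i
    simp only [Matrix.mulVec, dotProduct]
    rw [hSv, Finset.mul_sum]
    exact Finset.sum_le_sum fun j _ =>
      mul_le_mul_of_nonneg_right (hU i j) (hv j).le
  have hBvpos : ∀ i, 0 < (B.mulVec v) i := fun i =>
    (mul_pos hδ hSvpos).trans_le (hBv_lo i)
  -- lower bound on each ratio
  have hlo : ∀ i, α + δ * (Su - α * Sv) / (M * Sv) ≤ (B.mulVec u) i / (B.mulVec v) i := by
    intro i
    have h1 : δ * (Su - α * Sv) + α * (B.mulVec v) i ≤ (B.mulVec u) i := by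
      have : ∀ j, δ * (u j - α * v j) + α * (B i j * v j) ≤ B i j * u j := by
        intro j
        have h2 : δ * (u j - α * v j) ≤ B i j * (u j - α * v j) :=
          mul_le_mul_of_nonneg_right (hL i j) (sub_nonneg.mpr (hαv j))
        nlinarith
      calc δ * (Su - α * Sv) + α * (B.mulVec v) i
          = ∑ j, (δ * (u j - α * v j) + α * (B i j * v j)) := by
            rw [hSu, hSv, Finset.mul_sum, ← Finset.sum_sub_distrib, Finset.mul_sum]
            simp only [Matrix.mulVec, dotProduct, Finset.mul_sum]
            rw [← Finset.sum_add_distrib]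
        _ ≤ ∑ j, B i j * u j := Finset.sum_le_sum fun j _ => this j
        _ = (B.mulVec u) i := by simp [Matrix.mulVec, dotProduct]
    have hnum : 0 ≤ δ * (Su - α * Sv) := by
      have := sub_nonneg.mpr hαS; positivity
    have h3 : δ * (Su - α * Sv) / (M * Sv) ≤ δ * (Su - α * Sv) / (B.mulVec v) i :=
      div_le_div_of_nonneg_left hnum (hBvpos i) (hBv_hi i)
    rw [le_div_iff₀ (hBvpos i)]
    calc (α + δ * (Su - α * Sv) / (M * Sv)) * (B.mulVec v) i
        = α * (B.mulVec v) i + (δ * (Su - α * Sv) / (M * Sv)) * (B.mulVec v) i := by ring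
      _ ≤ α * (B.mulVec v) i + δ * (Su - α * Sv) := by
          have : (δ * (Su - α * Sv) / (M * Sv)) * (B.mulVec v) i ≤ δ * (Su - α * Sv) := by
            rw [div_mul_eq_mul_div, div_le_iff₀ (mul_pos hM hSvpos)]
            exact mul_le_mul_of_nonneg_left (hBv_hi i) hnum
          linarith
      _ ≤ (B.mulVec u) i := by linarith
  -- upper bound on each ratio
  have hhi : ∀ i, (B.mulVec u) i / (B.mulVec v) i ≤ β - δ * (β * Sv - Su) / (M * Sv) := by
    intro i
    have h1 : (B.mulVec u) i ≤ β * (B.mulVec v) i - δ * (β * Sv - Su) := by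
      have : ∀ j, B i j * u j ≤ β * (B i j * v j) - δ * (β * v j - u j) := by
        intro j
        have h2 : δ * (β * v j - u j) ≤ B i j * (β * v j - u j) :=
          mul_le_mul_of_nonneg_right (hL i j) (sub_nonneg.mpr (hβv j))
        nlinarith
      calc (B.mulVec u) i = ∑ j, B i j * u j := by simp [Matrix.mulVec, dotProduct]
        _ ≤ ∑ j, (β * (B i j * v j) - δ * (β * v j - u j)) :=
            Finset.sum_le_sum fun j _ => this j
        _ = β * (B.mulVec v) i - δ * (β * Sv - Su) := by
            rw [hSu, hSv, Finset.mul_sum, ← Finset.sum_sub_distrib, Finset.mul_sum]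
            simp only [Matrix.mulVec, dotProduct, Finset.mul_sum]
            rw [← Finset.sum_sub_distrib]
    have hnum : 0 ≤ δ * (β * Sv - Su) := by
      have := sub_nonneg.mpr hβS; positivity
    have h3 : δ * (β * Sv - Su) / (M * Sv) ≤ δ * (β * Sv - Su) / (B.mulVec v) i :=
      div_le_div_of_nonneg_left hnum (hBvpos i) (hBv_hi i)
    rw [div_le_iff₀ (hBvpos i)]
    have h4 : (δ * (β * Sv - Su) / (M * Sv)) * (B.mulVec v) i ≤ δ * (β * Sv - Su) := by
      rw [div_mul_eq_mul_div, div_le_iff₀ (mul_pos hM hSvpos)]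
      exact mul_le_mul_of_nonneg_left (hBv_hi i) hnum
    nlinarith [hBvpos i]
  have hmin : α + δ * (Su - α * Sv) / (M * Sv) ≤ rmin (B.mulVec u) (B.mulVec v) :=
    le_rmin hlo
  have hmax : rmax (B.mulVec u) (B.mulVec v) ≤ β - δ * (β * Sv - Su) / (M * Sv) :=
    rmax_le hhi
  have key : δ * (β * Sv - Su) / (M * Sv) + δ * (Su - α * Sv) / (M * Sv)
      = (δ / M) * (β - α) := by
    field_simp
    ring
  linarith

/-- The ratio gap of `(A (B w), B w)` is uniformly bounded over positive `w`. -/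
lemma gap_bdd (A B : Matrix (Fin n) (Fin n) ℝ) (hA : ∀ i j, 0 ≤ A i j)
    (hB : ∀ i j, 0 < B i j) :
    ∃ K : ℝ, ∀ w : Fin n → ℝ, (∀ i, 0 < w i) →
      rmax (A.mulVec (B.mulVec w)) (B.mulVec w) - rmin (A.mulVec (B.mulVec w)) (B.mulVec w)
        ≤ K := by
  obtain ⟨i₀⟩ := (inferInstance : Nonempty (Fin n))
  set δ : ℝ := Finset.univ.inf' Finset.univ_nonempty
    (fun p : Fin n × Fin n => B p.1 p.2) with hδdef
  set M₂ : ℝ := Finset.univ.sup' Finset.univ_nonempty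
    (fun p : Fin n × Fin n => (A * B) p.1 p.2) with hM₂def
  have hδpos : 0 < δ := by
    rw [hδdef, Finset.lt_inf'_iff]
    exact fun p _ => hB p.1 p.2
  have hδle : ∀ i j, δ ≤ B i j := fun i j =>
    Finset.inf'_le _ (mem_univ ((i, j) : Fin n × Fin n))
  have hABnn : ∀ i j, 0 ≤ (A * B) i j := by
    intro i j
    rw [Matrix.mul_apply]
    exact Finset.sum_nonneg fun k _ => mul_nonneg (hA i k) (hB k j).le
  have hM₂le : ∀ i j, (A * B) i j ≤ M₂ := fun i j =>
    Finset.le_sup' (fun p : Fin n × Fin n => (A * B) p.1 p.2) (mem_univ ((i, j) : Fin n × Fin n))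
  have hM₂nn : 0 ≤ M₂ := (hABnn i₀ i₀).trans (hM₂le i₀ i₀)
  refine ⟨M₂ / δ, fun w hw => ?_⟩
  set Sw := ∑ i, w i with hSw
  have hSwpos : 0 < Sw := Finset.sum_pos (fun i _ => hw i) univ_nonempty
  have hv_lo : ∀ i, δ * Sw ≤ (B.mulVec w) i := by
    intro i
    simp only [Matrix.mulVec, dotProduct]
    rw [hSw, Finset.mul_sum]
    exact Finset.sum_le_sum fun j _ => mul_le_mul_of_nonneg_right (hδle i j) (hw j).le
  have hvpos : ∀ i, 0 < (B.mulVec w) i := fun i =>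
    (mul_pos hδpos hSwpos).trans_le (hv_lo i)
  have hu_eq : A.mulVec (B.mulVec w) = (A * B).mulVec w := Matrix.mulVec_mulVec _ _ _
  have hu_hi : ∀ i, (A.mulVec (B.mulVec w)) i ≤ M₂ * Sw := by
    intro i
    rw [hu_eq]
    simp only [Matrix.mulVec, dotProduct]
    rw [hSw, Finset.mul_sum]
    exact Finset.sum_le_sum fun j _ => mul_le_mul_of_nonneg_right (hM₂le i j) (hw j).le
  have hu_nn : ∀ i, 0 ≤ (A.mulVec (B.mulVec w)) i := by
    intro i
    rw [hu_eq]
    simp only [Matrix.mulVec, dotProduct]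
    exact Finset.sum_nonneg fun j _ => mul_nonneg (hABnn i j) (hw j).le
  have h1 : rmax (A.mulVec (B.mulVec w)) (B.mulVec w) ≤ M₂ / δ := by
    apply rmax_le
    intro i
    calc (A.mulVec (B.mulVec w)) i / (B.mulVec w) i
        ≤ (M₂ * Sw) / (δ * Sw) :=
          div_le_div₀ (by positivity) (hu_hi i) (mul_pos hδpos hSwpos) (hv_lo i)
      _ = M₂ / δ := mul_div_mul_right _ _ hSwpos.ne'
  have h2 : (0:ℝ) ≤ rmin (A.mulVec (B.mulVec w)) (B.mulVec w) :=
    le_rmin fun i => div_nonneg (hu_nn i) (hvpos i).le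
  linarith

omit [NeZero n] in
lemma pow_nn (A : Matrix (Fin n) (Fin n) ℝ) (hA : ∀ i j, 0 ≤ A i j) (k : ℕ) :
    ∀ i j, 0 ≤ (A ^ k) i j := by
  induction k with
  | zero => intro i j; simp [Matrix.one_apply]; split <;> norm_num
  | succ m ih =>
    intro i j
    rw [pow_succ, Matrix.mul_apply]
    exact Finset.sum_nonneg fun l _ => mul_nonneg (ih i l) (hA l j)

omit [NeZero n] in
lemma mulVec_mono (A : Matrix (Fin n) (Fin n) ℝ) (hA : ∀ i j, 0 ≤ A i j)
    {x y : Fin n → ℝ} (h : ∀ i, x i ≤ y i) : ∀ i, (A.mulVec x) i ≤ (A.mulVec y) i := by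
  intro i
  simp only [Matrix.mulVec, dotProduct]
  exact Finset.sum_le_sum fun j _ => mul_le_mul_of_nonneg_left (h j) (hA i j)

omit [NeZero n] in
lemma spec_iff_eig {K : Type*} [Field K] (F : Matrix (Fin n) (Fin n) K) (x : K) :
    x ∈ spectrum K F ↔ ∃ u : Fin n → K, u ≠ 0 ∧ F.mulVec u = x • u := by
  rw [spectrum.mem_iff, Algebra.algebraMap_eq_smul_one,
    Matrix.isUnit_iff_isUnit_det, isUnit_iff_ne_zero, not_ne_iff,
    ← Matrix.exists_mulVec_eq_zero_iff]
  constructor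
  · rintro ⟨u, hu, h⟩
    refine ⟨u, hu, ?_⟩
    rw [Matrix.sub_mulVec, Matrix.smul_mulVec, Matrix.one_mulVec, sub_eq_zero] at h
    exact h.symm
  · rintro ⟨u, hu, h⟩
    refine ⟨u, hu, ?_⟩
    rw [Matrix.sub_mulVec, Matrix.smul_mulVec, Matrix.one_mulVec, h, sub_self]

omit [NeZero n] in
lemma mem_spec_complex (A : Matrix (Fin n) (Fin n) ℝ) (x : ℝ) (u : Fin n → ℝ)
    (hu : u ≠ 0) (huA : A.mulVec u = x • u) :
    (x : ℂ) ∈ spectrum ℂ (A.map (fun t : ℝ => (t : ℂ))) := by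
  rw [spec_iff_eig]
  refine ⟨fun i => (u i : ℂ), ?_, ?_⟩
  · intro h
    apply hu
    funext i
    have := congrFun h i
    simpa using this
  · funext i
    have := congrFun huA i
    simp only [Matrix.mulVec, dotProduct, Matrix.map_apply, Pi.smul_apply,
      smul_eq_mul] at this ⊢
    calc (∑ j : Fin n, (A i j : ℂ) * (u j : ℂ)) = ((∑ j : Fin n, A i j * u j : ℝ) : ℂ) := by
          push_cast; ring
    _ = ((x * u i : ℝ) : ℂ) := by rw [this]
    _ = (x : ℂ) * (u i : ℂ) := by push_cast; ring

end Helpers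

/-- If `A` is primitive nonnegative and invertible, `b > 0` and
`A b ≠ λ₁(A) b`, then some backward iterate `A⁻ᵏ b` leaves the interior of the cone
generated by the columns of `A` (for invertible `A` this interior is
`{x | A⁻¹ x > 0}` entrywise). -/
theorem exists_backward_iterate_leaving_interior_cone
    {n : ℕ} (A : Matrix (Fin n) (Fin n) ℝ) (hA : ∀ i j, 0 ≤ A i j)
    (hprim : ∃ k : ℕ, 0 < k ∧ ∀ i j, 0 < (A ^ k) i j)
    (hinv : IsUnit A.det)
    (b : Fin n → ℝ) (hb : ∀ i, 0 < b i)
    (ρ : ℝ) (hρ : ρ ∈ spectrum ℝ A)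
    (hρmax : ∀ μ ∈ spectrum ℂ (A.map (fun x : ℝ => (x : ℂ))), ‖μ‖ ≤ ρ)
    (hbe : A.mulVec b ≠ ρ • b) :
    ∃ k : ℕ, ¬ ∀ i, 0 < (A⁻¹.mulVec ((A⁻¹ ^ k).mulVec b)) i := by
  rcases Nat.eq_zero_or_pos n with hn | hn
  · subst hn
    exact absurd (funext fun i => i.elim0) hbe
  haveI : NeZero n := ⟨hn.ne'⟩
  by_contra hcon
  push_neg at hcon
  -- backward iterates
  set y : ℕ → (Fin n → ℝ) := fun k => (A⁻¹ ^ k).mulVec b with hy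
  have hy0 : y 0 = b := by simp [hy]
  have hysucc : ∀ k, y (k + 1) = A⁻¹.mulVec (y k) := by
    intro k
    simp only [hy, pow_succ']
    rw [← Matrix.mulVec_mulVec]
  have hypos : ∀ k i, 0 < y k i := by
    intro k
    cases k with
    | zero => rw [hy0]; exact hb
    | succ m => rw [hysucc m]; exact hcon m
  have hAy : ∀ k, A.mulVec (y (k + 1)) = y k := by
    intro k
    rw [hysucc k, Matrix.mulVec_mulVec, Matrix.mul_nonsing_inv A hinv, Matrix.one_mulVec]
  have hAky : ∀ p k, (A ^ p).mulVec (y (k + p)) = y k := by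
    intro p
    induction p with
    | zero => intro k; simp
    | succ q ih =>
      intro k
      have e : k + (q + 1) = (k + q) + 1 := by ring
      rw [e, pow_succ, ← Matrix.mulVec_mulVec, hAy (k + q), ih k]
  -- primitivity data
  obtain ⟨m₀, hm₀pos, hm₀⟩ := hprim
  set B : Matrix (Fin n) (Fin n) ℝ := A ^ m₀ with hB
  -- the pair of sequences
  set v : ℕ → (Fin n → ℝ) := fun j => y (j * m₀) with hv
  set u : ℕ → (Fin n → ℝ) := fun j => A.mulVec (y (j * m₀)) with hu
  have hvpos : ∀ j i, 0 < v j i := fun j i => hypos (j * m₀) i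
  have hvrec : ∀ j, B.mulVec (v (j + 1)) = v j := by
    intro j
    have e : (j + 1) * m₀ = j * m₀ + m₀ := by ring
    simp only [hv, hB, e]
    exact hAky m₀ (j * m₀)
  have hurec : ∀ j, B.mulVec (u (j + 1)) = u j := by
    intro j
    have hcomm : B * A = A * B := by
      rw [hB, ← pow_succ, ← pow_succ']
    simp only [hu]
    rw [Matrix.mulVec_mulVec, hcomm, ← Matrix.mulVec_mulVec]
    have := hvrec j
    simp only [hv] at this
    rw [this]
  -- contraction data for B
  obtain ⟨i₀⟩ := (inferInstance : Nonempty (Fin n))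
  set δ : ℝ := Finset.univ.inf' Finset.univ_nonempty
    (fun p : Fin n × Fin n => B p.1 p.2) with hδdef
  set M : ℝ := Finset.univ.sup' Finset.univ_nonempty
    (fun p : Fin n × Fin n => B p.1 p.2) with hMdef
  have hδpos : 0 < δ := by
    rw [hδdef, Finset.lt_inf'_iff]
    exact fun p _ => hm₀ p.1 p.2
  have hδle : ∀ i j, δ ≤ B i j := fun i j =>
    Finset.inf'_le _ (Finset.mem_univ ((i, j) : Fin n × Fin n))
  have hMle : ∀ i j, B i j ≤ M := fun i j =>
    Finset.le_sup' (fun p : Fin n × Fin n => B p.1 p.2)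
      (Finset.mem_univ ((i, j) : Fin n × Fin n))
  have hMpos : 0 < M := hδpos.trans_le ((hδle i₀ i₀).trans (hMle i₀ i₀))
  set θ : ℝ := 1 - δ / M with hθdef
  have hθ0 : 0 ≤ θ := by
    have : δ / M ≤ 1 := (div_le_one hMpos).mpr ((hδle i₀ i₀).trans (hMle i₀ i₀))
    simp only [hθdef]; linarith
  have hθ1 : θ < 1 := by
    have : 0 < δ / M := div_pos hδpos hMpos
    simp only [hθdef]; linarith
  -- the gap sequence
  set g : ℕ → ℝ := fun j => rmax (u j) (v j) - rmin (u j) (v j) with hg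
  have hgrec : ∀ j, g j ≤ θ * g (j + 1) := by
    intro j
    have := contract B δ M hδpos hδle hMle (u (j + 1)) (v (j + 1)) (hvpos (j + 1))
    rw [hurec j, hvrec j] at this
    exact this
  obtain ⟨K, hK⟩ := gap_bdd A B hA hm₀
  have hgK : ∀ j, g j ≤ K := by
    intro j
    have h1 := hK (v (j + 1)) (hvpos (j + 1))
    rw [hvrec j] at h1
    have h2 : u j = A.mulVec (v j) := rfl
    simpa [hg, ← h2] using h1
  have hiter : ∀ j, g 0 ≤ θ ^ j * g j := by
    intro j
    induction j with
    | zero => simp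
    | succ q ih =>
      calc g 0 ≤ θ ^ q * g q := ih
        _ ≤ θ ^ q * (θ * g (q + 1)) :=
            mul_le_mul_of_nonneg_left (hgrec q) (pow_nonneg hθ0 q)
        _ = θ ^ (q + 1) * g (q + 1) := by ring
  have hg0K : ∀ j, g 0 ≤ θ ^ j * K := by
    intro j
    calc g 0 ≤ θ ^ j * g j := hiter j
      _ ≤ θ ^ j * K := mul_le_mul_of_nonneg_left (hgK j) (pow_nonneg hθ0 j)
  have hg0le : g 0 ≤ 0 := by
    have htend : Filter.Tendsto (fun j : ℕ => θ ^ j * K) Filter.atTop (nhds 0) := by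
      have := (tendsto_pow_atTop_nhds_zero_of_lt_one hθ0 hθ1).mul_const K
      simpa using this
    exact ge_of_tendsto' htend hg0K
  have hg0 : g 0 = 0 := le_antisymm hg0le (by
    simp only [hg]
    have := rmin_le_rmax (u 0) (v 0)
    linarith)
  -- conclude A b = t • b
  have hu0 : u 0 = A.mulVec b := by simp [hu, hv, hy]
  have hv0 : v 0 = b := by simp [hv, hy]
  set t : ℝ := rmin (A.mulVec b) b with ht
  have hrmaxmin : rmax (A.mulVec b) b = t := by
    simp only [hg, hu0, hv0] at hg0
    rw [ht]; linarith
  have hAb : A.mulVec b = t • b := by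
    funext i
    have h1 : (A.mulVec b) i / b i ≤ t := hrmaxmin ▸ le_rmax (A.mulVec b) b i
    have h2 : t ≤ (A.mulVec b) i / b i := rmin_le (A.mulVec b) b i
    have h3 : (A.mulVec b) i / b i = t := le_antisymm h1 h2
    rw [div_eq_iff (hb i).ne'] at h3
    simpa [Pi.smul_apply, smul_eq_mul, mul_comm] using h3
  -- powers of A on b
  have hAkb : ∀ k, (A ^ k).mulVec b = t ^ k • b := by
    intro k
    induction k with
    | zero => simp
    | succ q ih =>
      rw [pow_succ', ← Matrix.mulVec_mulVec, ih, Matrix.mulVec_smul, hAb, pow_succ']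
      rw [smul_smul, mul_comm (t ^ q) t]
  -- t is positive
  have htnn : 0 ≤ t := by
    rw [ht]
    apply le_rmin
    intro i
    apply div_nonneg _ (hb i).le
    simp only [Matrix.mulVec, dotProduct]
    exact Finset.sum_nonneg fun j _ => mul_nonneg (hA i j) (hb j).le
  have htpos : 0 < t := by
    rcases htnn.lt_or_eq with h | h
    · exact h
    · exfalso
      have h1 := hAkb m₀
      have h2 : (0:ℝ) < ((A ^ m₀).mulVec b) i₀ := by
        simp only [Matrix.mulVec, dotProduct]
        exact Finset.sum_pos (fun j _ => mul_pos (hm₀ i₀ j) (hb j)) Finset.univ_nonempty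
      rw [h1] at h2
      simp only [Pi.smul_apply, smul_eq_mul] at h2
      rw [← h, zero_pow hm₀pos.ne'] at h2
      simp at h2
  -- b is nonzero
  have hbne : b ≠ 0 := by
    intro h
    have := hb i₀
    rw [h] at this
    simp at this
  -- ρ is nonnegative
  obtain ⟨u₀, hu₀ne, hu₀⟩ := (spec_iff_eig A ρ).mp hρ
  have hρspecC : (ρ : ℂ) ∈ spectrum ℂ (A.map (fun x : ℝ => (x : ℂ))) :=
    mem_spec_complex A ρ u₀ hu₀ne hu₀
  have hρnn : 0 ≤ ρ := by
    have := hρmax _ hρspecC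
    rw [Complex.norm_real, Real.norm_eq_abs] at this
    linarith [le_abs_self ρ, abs_nonneg ρ]
  -- t ≤ ρ
  have htρ : t ≤ ρ := by
    have := hρmax _ (mem_spec_complex A t b hbne hAb)
    rw [Complex.norm_real, Real.norm_eq_abs] at this
    linarith [le_abs_self t]
  -- ρ ≤ t
  have hρt : ρ ≤ t := by
    by_contra hlt
    push_neg at hlt
    set w : Fin n → ℝ := fun i => |u₀ i| with hw
    have hwstep : ∀ i, ρ * w i ≤ (A.mulVec w) i := by
      intro i
      have h1 : ρ * w i = |ρ * u₀ i| := by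
        rw [abs_mul, abs_of_nonneg hρnn]
      have h2 : ρ * u₀ i = (A.mulVec u₀) i := by
        rw [hu₀]; simp [mul_comm]
      rw [h1, h2]
      calc |(A.mulVec u₀) i| ≤ ∑ j, |A i j * u₀ j| := by
            simp only [Matrix.mulVec, dotProduct]
            exact Finset.abs_sum_le_sum_abs _ _
        _ = (A.mulVec w) i := by
            simp only [Matrix.mulVec, dotProduct, hw]
            exact Finset.sum_congr rfl fun j _ => by
              rw [abs_mul, abs_of_nonneg (hA i j)]
    have hwk : ∀ k i, ρ ^ k * w i ≤ ((A ^ k).mulVec w) i := by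
      intro k
      induction k with
      | zero => intro i; simp
      | succ q ih =>
        intro i
        have h1 : ρ ^ (q + 1) * w i = ρ * (ρ ^ q * w i) := by ring
        have h2 : ρ * (ρ ^ q * w i) ≤ ρ * ((A ^ q).mulVec w) i :=
          mul_le_mul_of_nonneg_left (ih i) hρnn
        have h3 : ρ * ((A ^ q).mulVec w) i = ((A ^ q).mulVec (ρ • w)) i := by
          rw [Matrix.mulVec_smul]; simp
        have h4 : ((A ^ q).mulVec (ρ • w)) i ≤ ((A ^ q).mulVec (A.mulVec w)) i := by
          apply mulVec_mono _ (pow_nn A hA q)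
          intro j
          simpa using hwstep j
        have h5 : ((A ^ q).mulVec (A.mulVec w)) i = ((A ^ (q + 1)).mulVec w) i := by
          rw [Matrix.mulVec_mulVec, ← pow_succ]
        linarith
    set s : ℝ := rmax w b with hs
    have hws : ∀ i, w i ≤ s * b i := fun i =>
      (div_le_iff₀ (hb i)).mp (le_rmax w b i)
    have hkey : ∀ k i, ρ ^ k * w i ≤ s * (t ^ k * b i) := by
      intro k i
      have h1 := hwk k i
      have h2 : ((A ^ k).mulVec w) i ≤ ((A ^ k).mulVec (s • b)) i := by
        apply mulVec_mono _ (pow_nn A hA k)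
        intro j
        simpa using hws j
      have h3 : ((A ^ k).mulVec (s • b)) i = s * (t ^ k * b i) := by
        rw [Matrix.mulVec_smul, hAkb k]
        simp [smul_smul]
      linarith
    obtain ⟨i₁, hi₁⟩ : ∃ i, u₀ i ≠ 0 := by
      by_contra hc
      push_neg at hc
      exact hu₀ne (funext hc)
    have hwi₁ : 0 < w i₁ := abs_pos.mpr hi₁
    have hratio : ∀ k, (ρ / t) ^ k ≤ s * b i₁ / w i₁ := by
      intro k
      have h1 := hkey k i₁
      rw [div_pow, div_le_div_iff₀ (pow_pos htpos k) hwi₁]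
      calc ρ ^ k * w i₁ ≤ s * (t ^ k * b i₁) := h1
        _ = s * b i₁ * t ^ k := by ring
    obtain ⟨k, hk⟩ := pow_unbounded_of_one_lt (s * b i₁ / w i₁)
      ((one_lt_div htpos).mpr hlt)
    exact absurd (hratio k) (not_le.mpr hk)
  have : A.mulVec b = ρ • b := by
    rw [hAb, le_antisymm hρt htρ]
  exact hbe this
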